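/- For every positive integer k, the k × k grid graph G satisfies h_2(G) ≥ k/2, where h_2 is the 2-integral Hadwiger number; in particular the fractional Hadwiger number of the k × k grid graph is at least k/2. -/

import Mathlib

open Finset

/-- Any two members of a bramble either share a vertex or are joined by an edge,
and each member induces a connected subgraph. -/
def IsBramble {V : Type} (G : SimpleGraph V) (B : Finset (Finset V)) : Prop :=
  (∀ A ∈ B, (G.induce (A : Set V)).Connected) ∧
    ∀ A ∈ B, ∀ A' ∈ B, (∃ v, v ∈ A ∧ v ∈ A') ∨ ∃ a ∈ A, ∃ b ∈ A', G.Adj a b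

/-- A strong bramble: any two (possibly equal) members are joined by an edge. -/
def IsStrongBramble {V : Type} (G : SimpleGraph V) (B : Finset (Finset V)) : Prop :=
  (∀ A ∈ B, (G.induce (A : Set V)).Connected) ∧
    ∀ A ∈ B, ∀ A' ∈ B, ∃ a ∈ A, ∃ b ∈ A', G.Adj a b

/-- A valid weighting: nonnegative weights whose total at every vertex is at most 1. -/
def IsValidWeight {V : Type} [DecidableEq V] (B : Finset (Finset V)) (w : Finset V → ℝ) : Prop :=
  (∀ A ∈ B, 0 ≤ w A) ∧ ∀ v : V, ∑ A ∈ B.filter (fun A => v ∈ A), w A ≤ 1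

/-- The fractional Hadwiger number. -/
noncomputable def fracHadwiger {V : Type} [Fintype V] [DecidableEq V] (G : SimpleGraph V) : ℝ :=
  sSup {h : ℝ | ∃ B : Finset (Finset V), ∃ w : Finset V → ℝ,
    IsBramble G B ∧ IsValidWeight B w ∧ h = ∑ A ∈ B, w A}

/-- The r-integral Hadwiger number: all weights multiples of 1/r. -/
noncomputable def rIntHadwiger {V : Type} [Fintype V] [DecidableEq V]
    (G : SimpleGraph V) (r : ℕ) : ℝ :=
  sSup {h : ℝ | ∃ B : Finset (Finset V), ∃ w : Finset V → ℝ,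
    IsBramble G B ∧ IsValidWeight B w ∧ (∀ A ∈ B, ∃ k : ℕ, w A = k / r) ∧
    h = ∑ A ∈ B, w A}

/-- The lower fractional Hadwiger number (using strong brambles). -/
noncomputable def lowerFracHadwiger {V : Type} [Fintype V] [DecidableEq V]
    (G : SimpleGraph V) : ℝ :=
  sSup {h : ℝ | ∃ B : Finset (Finset V), ∃ w : Finset V → ℝ,
    IsStrongBramble G B ∧ IsValidWeight B w ∧ h = ∑ A ∈ B, w A}

/-- The lower r-integral Hadwiger number. -/
noncomputable def lowerRIntHadwiger {V : Type} [Fintype V] [DecidableEq V]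
    (G : SimpleGraph V) (r : ℕ) : ℝ :=
  sSup {h : ℝ | ∃ B : Finset (Finset V), ∃ w : Finset V → ℝ,
    IsStrongBramble G B ∧ IsValidWeight B w ∧ (∀ A ∈ B, ∃ k : ℕ, w A = k / r) ∧
    h = ∑ A ∈ B, w A}

/-- `G` has a clique minor of order `t`. -/
def HasCliqueMinor {V : Type} (G : SimpleGraph V) (t : ℕ) : Prop :=
  ∃ f : Fin t → Finset V,
    (∀ i, (f i).Nonempty) ∧
    (∀ i, (G.induce ((f i : Set V))).Connected) ∧
    (∀ i j, i ≠ j → Disjoint (f i) (f j)) ∧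
    (∀ i j, i ≠ j → ∃ a ∈ f i, ∃ b ∈ f j, G.Adj a b)

/-- `G` has a clique minor of order `t` and breadth at most `d` (each part has ≤ d vertices). -/
def HasCliqueMinorBreadth {V : Type} (G : SimpleGraph V) (t : ℕ) (d : ℝ) : Prop :=
  ∃ f : Fin t → Finset V,
    (∀ i, (f i).Nonempty) ∧
    (∀ i, (G.induce ((f i : Set V))).Connected) ∧
    (∀ i j, i ≠ j → Disjoint (f i) (f j)) ∧
    (∀ i j, i ≠ j → ∃ a ∈ f i, ∃ b ∈ f j, G.Adj a b) ∧
    (∀ i, ((f i).card : ℝ) ≤ d)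

/-- The Hadwiger number: the largest order of a clique minor. -/
noncomputable def hadwigerNumber {V : Type} (G : SimpleGraph V) : ℕ :=
  sSup {t : ℕ | HasCliqueMinor G t}

/-- The lexicographic product of two graphs. -/
def lexProd {α β : Type} (G : SimpleGraph α) (H : SimpleGraph β) : SimpleGraph (α × β) where
  Adj x y := G.Adj x.1 y.1 ∨ (x.1 = y.1 ∧ H.Adj x.2 y.2)
  symm := by
    constructor
    intro x y hxy
    rcases hxy with h | ⟨h1, h2⟩
    · exact Or.inl h.symm
    · exact Or.inr ⟨h1.symm, h2.symm⟩
  loopless := by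
    constructor
    intro x hx
    rcases hx with h | ⟨_, h2⟩
    · exact G.irrefl h
    · exact H.irrefl h2

/-- The complete blow-up `G[r] = G · K_r`. -/
def completeBlowup {α : Type} (G : SimpleGraph α) (r : ℕ) : SimpleGraph (α × Fin r) :=
  lexProd G (⊤ : SimpleGraph (Fin r))

/-- The blow-up `G(r) = G · I_r`. -/
def emptyBlowup {α : Type} (G : SimpleGraph α) (r : ℕ) : SimpleGraph (α × Fin r) :=
  lexProd G (⊥ : SimpleGraph (Fin r))

/-- `H` is a minor of `G`: branch sets indexed by the vertices of `H`. -/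
def IsMinor {W V : Type} (H : SimpleGraph W) (G : SimpleGraph V) : Prop :=
  ∃ f : W → Finset V,
    (∀ u, (G.induce ((f u : Set V))).Connected) ∧
    (∀ u u', u ≠ u' → Disjoint (f u) (f u')) ∧
    (∀ u u', H.Adj u u' → ∃ a ∈ f u, ∃ b ∈ f u', G.Adj a b)

/-- The k × k grid graph. -/
def gridGraph (k : ℕ) : SimpleGraph (Fin k × Fin k) where
  Adj a b := (a.1 = b.1 ∧ (a.2.val + 1 = b.2.val ∨ b.2.val + 1 = a.2.val)) ∨
             (a.2 = b.2 ∧ (a.1.val + 1 = b.1.val ∨ b.1.val + 1 = a.1.val))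
  symm := by
    constructor
    intro a b hab
    rcases hab with ⟨h1, h2⟩ | ⟨h1, h2⟩
    · exact Or.inl ⟨h1.symm, h2.symm⟩
    · exact Or.inr ⟨h1.symm, h2.symm⟩
  loopless := by
    constructor
    intro a ha
    rcases ha with ⟨_, h | h⟩ | ⟨_, h | h⟩ <;> omega


def hook (k : ℕ) (i : Fin k) : Finset (Fin k × Fin k) :=
  Finset.univ.filter (fun p => p.1 = i ∨ p.2 = i)

lemma mem_hook {k : ℕ} {i : Fin k} {p : Fin k × Fin k} :
    p ∈ hook k i ↔ p.1 = i ∨ p.2 = i := by simp [hook]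

lemma reach_row (k : ℕ) (i : Fin k) :
    ∀ d : ℕ, ∀ y : Fin k, Nat.dist y.val i.val ≤ d →
    ((gridGraph k).induce ((hook k i : Finset (Fin k × Fin k)) : Set (Fin k × Fin k))).Reachable
      ⟨(i, y), by simp [hook]⟩ ⟨(i, i), by simp [hook]⟩ := by
  intro d
  induction d with
  | zero =>
    intro y hy
    have hy0 : y = i := Fin.ext (by simp [Nat.dist] at hy; omega)
    subst hy0
    exact SimpleGraph.Reachable.refl _
  | succ d ih =>
    intro y hy
    by_cases h : y = i
    · subst h; exact SimpleGraph.Reachable.refl _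
    · have hne : y.val ≠ i.val := fun hv => h (Fin.ext hv)
      rcases Nat.lt_or_ge y.val i.val with hlt | hge
      · have hy1 : y.val + 1 < k := lt_of_le_of_lt hlt i.isLt
        have hadj : ((gridGraph k).induce
            ((hook k i : Finset (Fin k × Fin k)) : Set (Fin k × Fin k))).Adj
            ⟨(i, y), by simp [hook]⟩ ⟨(i, ⟨y.val + 1, hy1⟩), by simp [hook]⟩ :=
          Or.inl ⟨rfl, Or.inl rfl⟩
        exact hadj.reachable.trans (ih ⟨y.val + 1, hy1⟩ (by simp [Nat.dist] at hy ⊢; omega))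
      · have hpos : 0 < y.val := by omega
        have hy1 : y.val - 1 < k := by omega
        have hadj : ((gridGraph k).induce
            ((hook k i : Finset (Fin k × Fin k)) : Set (Fin k × Fin k))).Adj
            ⟨(i, y), by simp [hook]⟩ ⟨(i, ⟨y.val - 1, hy1⟩), by simp [hook]⟩ :=
          Or.inl ⟨rfl, Or.inr (Nat.succ_pred_eq_of_pos hpos)⟩
        exact hadj.reachable.trans (ih ⟨y.val - 1, hy1⟩ (by simp [Nat.dist] at hy ⊢; omega))

lemma reach_col (k : ℕ) (i : Fin k) :
    ∀ d : ℕ, ∀ x : Fin k, Nat.dist x.val i.val ≤ d →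
    ((gridGraph k).induce ((hook k i : Finset (Fin k × Fin k)) : Set (Fin k × Fin k))).Reachable
      ⟨(x, i), by simp [hook]⟩ ⟨(i, i), by simp [hook]⟩ := by
  intro d
  induction d with
  | zero =>
    intro x hx
    have hx0 : x = i := Fin.ext (by simp [Nat.dist] at hx; omega)
    subst hx0
    exact SimpleGraph.Reachable.refl _
  | succ d ih =>
    intro x hx
    by_cases h : x = i
    · subst h; exact SimpleGraph.Reachable.refl _
    · have hne : x.val ≠ i.val := fun hv => h (Fin.ext hv)
      rcases Nat.lt_or_ge x.val i.val with hlt | hge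
      · have hx1 : x.val + 1 < k := lt_of_le_of_lt hlt i.isLt
        have hadj : ((gridGraph k).induce
            ((hook k i : Finset (Fin k × Fin k)) : Set (Fin k × Fin k))).Adj
            ⟨(x, i), by simp [hook]⟩ ⟨(⟨x.val + 1, hx1⟩, i), by simp [hook]⟩ :=
          Or.inr ⟨rfl, Or.inl rfl⟩
        exact hadj.reachable.trans (ih ⟨x.val + 1, hx1⟩ (by simp [Nat.dist] at hx ⊢; omega))
      · have hpos : 0 < x.val := by omega
        have hx1 : x.val - 1 < k := by omega
        have hadj : ((gridGraph k).induce
            ((hook k i : Finset (Fin k × Fin k)) : Set (Fin k × Fin k))).Adj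
            ⟨(x, i), by simp [hook]⟩ ⟨(⟨x.val - 1, hx1⟩, i), by simp [hook]⟩ :=
          Or.inr ⟨rfl, Or.inr (Nat.succ_pred_eq_of_pos hpos)⟩
        exact hadj.reachable.trans (ih ⟨x.val - 1, hx1⟩ (by simp [Nat.dist] at hx ⊢; omega))

lemma hook_connected (k : ℕ) (i : Fin k) :
    ((gridGraph k).induce ((hook k i : Finset (Fin k × Fin k)) : Set (Fin k × Fin k))).Connected := by
  rw [SimpleGraph.connected_iff]
  refine ⟨?_, ⟨⟨(i, i), by simp [hook]⟩⟩⟩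
  have key : ∀ p : ((hook k i : Finset (Fin k × Fin k)) : Set (Fin k × Fin k)),
      ((gridGraph k).induce _).Reachable p ⟨(i, i), by simp [hook]⟩ := by
    rintro ⟨⟨a, b⟩, hp⟩
    simp only [Finset.coe_filter, Set.mem_setOf_eq, hook, Finset.mem_coe, Finset.mem_filter] at hp
    rcases hp.2 with h1 | h2
    · subst h1; exact reach_row k a (Nat.dist b.val a.val) b le_rfl
    · subst h2; exact reach_col k b (Nat.dist a.val b.val) a le_rfl
  intro p q
  exact (key p).trans (key q).symm

lemma frac_bdd {V : Type} [Fintype V] [DecidableEq V] (G : SimpleGraph V) :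
    BddAbove {h : ℝ | ∃ B : Finset (Finset V), ∃ w : Finset V → ℝ,
      IsBramble G B ∧ IsValidWeight B w ∧ h = ∑ A ∈ B, w A} := by
  refine ⟨(Fintype.card V : ℝ), ?_⟩
  rintro h ⟨B, w, hB, hw, rfl⟩
  have hne : ∀ A ∈ B, A.Nonempty := by
    intro A hA
    obtain ⟨⟨v, hv⟩⟩ := (hB.1 A hA).nonempty
    exact ⟨v, hv⟩
  have step1 : ∑ A ∈ B, w A ≤ ∑ A ∈ B, ∑ _v ∈ A, w A := by
    apply Finset.sum_le_sum
    intro A hA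
    have h1 : (1 : ℝ) ≤ (A.card : ℝ) := by
      exact_mod_cast Nat.one_le_iff_ne_zero.mpr (Finset.card_pos.mpr (hne A hA)).ne'
    have := mul_le_mul_of_nonneg_left h1 (hw.1 A hA)
    rw [Finset.sum_const, nsmul_eq_mul]
    linarith
  have step2 : ∑ A ∈ B, ∑ _v ∈ A, w A
      = ∑ v : V, ∑ A ∈ B.filter (fun A => v ∈ A), w A := by
    calc ∑ A ∈ B, ∑ _v ∈ A, w A
        = ∑ A ∈ B, ∑ v : V, if v ∈ A then w A else 0 := by
          refine Finset.sum_congr rfl fun A _ => ?_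
          rw [Finset.sum_ite_mem, Finset.univ_inter]
      _ = ∑ v : V, ∑ A ∈ B, if v ∈ A then w A else 0 := Finset.sum_comm
      _ = ∑ v : V, ∑ A ∈ B.filter (fun A => v ∈ A), w A := by
          exact Finset.sum_congr rfl fun v _ => (Finset.sum_filter _ _).symm
  have step3 : ∑ v : V, ∑ A ∈ B.filter (fun A => v ∈ A), w A ≤ (Fintype.card V : ℝ) := by
    calc ∑ v : V, ∑ A ∈ B.filter (fun A => v ∈ A), w A
        ≤ ∑ _v : V, (1 : ℝ) := Finset.sum_le_sum fun v _ => hw.2 v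
      _ = (Fintype.card V : ℝ) := by simp
  linarith

lemma hook_inj (k : ℕ) : Function.Injective (hook k) := by
  intro i j hij
  have : (i, i) ∈ hook k j := hij ▸ mem_hook.mpr (Or.inl rfl)
  rcases mem_hook.mp this with h | h <;> exact h

/-- the k × k grid graph `G` satisfies `h_2(G) ≥ k/2`, and in particular
`h_f(G) ≥ k/2`. -/
theorem gridGraph_rIntHadwiger_two
    (k : ℕ) (hk : 0 < k) :
    (k : ℝ) / 2 ≤ rIntHadwiger (gridGraph k) 2 ∧ (k : ℝ) / 2 ≤ fracHadwiger (gridGraph k) := by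
  set B : Finset (Finset (Fin k × Fin k)) := Finset.univ.image (hook k) with hBdef
  set w : Finset (Fin k × Fin k) → ℝ := fun _ => 1 / 2 with hwdef
  have hBcard : B.card = k := by
    rw [hBdef, Finset.card_image_of_injective _ (hook_inj k)]
    simp
  have hbram : IsBramble (gridGraph k) B := by
    constructor
    · intro A hA
      obtain ⟨i, _, rfl⟩ := Finset.mem_image.mp hA
      exact hook_connected k i
    · intro A hA A' hA'
      obtain ⟨i, _, rfl⟩ := Finset.mem_image.mp hA
      obtain ⟨j, _, rfl⟩ := Finset.mem_image.mp hA'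
      exact Or.inl ⟨(i, j), mem_hook.mpr (Or.inl rfl), mem_hook.mpr (Or.inr rfl)⟩
  have hvalid : IsValidWeight B w := by
    constructor
    · intro A _; norm_num [hwdef]
    · intro v
      have hsub : B.filter (fun A => v ∈ A) ⊆ {hook k v.1, hook k v.2} := by
        intro A hA
        rw [Finset.mem_filter] at hA
        obtain ⟨i, _, rfl⟩ := Finset.mem_image.mp hA.1
        rcases mem_hook.mp hA.2 with h | h <;> subst h <;> simp
      have hc : (B.filter (fun A => v ∈ A)).card ≤ 2 := by
        refine (Finset.card_le_card hsub).trans ?_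
        exact (Finset.card_insert_le _ _).trans (by simp)
      rw [Finset.sum_const, nsmul_eq_mul]
      have : ((B.filter (fun A => v ∈ A)).card : ℝ) ≤ 2 := by exact_mod_cast hc
      nlinarith
  have hsum : ∑ A ∈ B, w A = (k : ℝ) / 2 := by
    rw [Finset.sum_const, nsmul_eq_mul, hBcard]
    ring
  have hbdd := frac_bdd (gridGraph k)
  constructor
  · have hsub : {h : ℝ | ∃ B : Finset (Finset (Fin k × Fin k)), ∃ w,
        IsBramble (gridGraph k) B ∧ IsValidWeight B w ∧
        (∀ A ∈ B, ∃ m : ℕ, w A = m / (2:ℕ)) ∧ h = ∑ A ∈ B, w A} ⊆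
        {h : ℝ | ∃ B : Finset (Finset (Fin k × Fin k)), ∃ w,
        IsBramble (gridGraph k) B ∧ IsValidWeight B w ∧ h = ∑ A ∈ B, w A} := by
      rintro h ⟨B, w, h1, h2, _, h4⟩
      exact ⟨B, w, h1, h2, h4⟩
    refine le_csSup (hbdd.mono hsub) ?_
    refine ⟨B, w, hbram, hvalid, fun A _ => ⟨1, by norm_num [hwdef]⟩, hsum.symm⟩
  · exact le_csSup hbdd ⟨B, w, hbram, hvalid, hsum.symm⟩
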